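/- Let H be an n×n real symmetric invertible matrix with exactly one negative eigenvalue λ₁ < 0 (all other eigenvalues being positive), and let ρ be a real number with ρ > -1/λ₁ and ρ > 0. Then H + ρH² is positive definite. -/

import Mathlib

open Matrix

/-- Conjugation of a positive definite matrix by an invertible matrix is positive definite. -/
lemma posDef_conj_of_isUnit {n : ℕ} {A B : Matrix (Fin n) (Fin n) ℝ}
    (hA : A.PosDef) (hB : IsUnit B) : (B * A * Bᴴ).PosDef := by
  have hBH : IsUnit Bᴴ := by
    rw [Matrix.isUnit_iff_isUnit_det, Matrix.det_conjTranspose, isUnit_star,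
      ← Matrix.isUnit_iff_isUnit_det]
    exact hB
  refine Matrix.posDef_iff_dotProduct_mulVec.mpr ⟨?_, fun x hx => ?_⟩
  · show (B * A * Bᴴ)ᴴ = B * A * Bᴴ
    rw [Matrix.conjTranspose_mul, Matrix.conjTranspose_mul,
      Matrix.conjTranspose_conjTranspose, hA.1.eq, Matrix.mul_assoc]
  · have hy : Bᴴ *ᵥ x ≠ 0 := by
      intro h
      obtain ⟨u, hu⟩ := hBH
      have := congrArg (fun v => (↑u⁻¹ : Matrix (Fin n) (Fin n) ℝ) *ᵥ v) h
      simp only [Matrix.mulVec_mulVec, hu, Units.inv_mul, Matrix.one_mulVec,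
        Matrix.mulVec_zero] at this
      rw [← hu] at this
      simp only [Matrix.mulVec_mulVec, Units.inv_mul, Matrix.one_mulVec,
        Matrix.mulVec_zero] at this
      exact hx this
    have key : star x ⬝ᵥ ((B * A * Bᴴ) *ᵥ x)
        = star (Bᴴ *ᵥ x) ⬝ᵥ (A *ᵥ (Bᴴ *ᵥ x)) := by
      rw [← Matrix.mulVec_mulVec, ← Matrix.mulVec_mulVec, Matrix.dotProduct_mulVec (star x) B,
        star_mulVec, Matrix.conjTranspose_conjTranspose]
    rw [key]
    exact hA.dotProduct_mulVec_pos hy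

/-- Let `H` be an `n × n` real symmetric invertible matrix with exactly one negative
eigenvalue `λ₁ < 0` (all other eigenvalues positive), and let `ρ > -1/λ₁` with `ρ > 0`.
Then `H + ρ H²` is positive definite. -/
theorem posDef_add_smul_sq_of_index_one_saddle {n : ℕ}
    (H : Matrix (Fin n) (Fin n) ℝ) (hH : H.IsHermitian) (hinv : IsUnit H) (ρ : ℝ)
    (i₀ : Fin n) (hneg : hH.eigenvalues i₀ < 0)
    (hpos : ∀ j : Fin n, j ≠ i₀ → 0 < hH.eigenvalues j)
    (hρ : -1 / hH.eigenvalues i₀ < ρ) (hρ0 : 0 < ρ) :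
    (H + ρ • (H * H)).PosDef := by
  set U : Matrix (Fin n) (Fin n) ℝ := (hH.eigenvectorUnitary : Matrix (Fin n) (Fin n) ℝ) with hU
  set lam := hH.eigenvalues
  have hUU : Uᴴ * U = 1 := by
    rw [← Matrix.star_eq_conjTranspose]
    exact (Matrix.mem_unitaryGroup_iff').mp hH.eigenvectorUnitary.2
  have hspec : H = U * diagonal (RCLike.ofReal ∘ lam) * star U := hH.spectral_theorem
  rw [Matrix.star_eq_conjTranspose] at hspec
  have hdiag : (RCLike.ofReal ∘ lam : Fin n → ℝ) = lam := by
    funext i; simp [RCLike.ofReal]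
  rw [hdiag] at hspec
  have hsq : H * H = U * diagonal (fun i => lam i ^ 2) * Uᴴ := by
    conv_lhs => rw [hspec]
    rw [show (U * diagonal lam * Uᴴ) * (U * diagonal lam * Uᴴ)
        = U * diagonal lam * (Uᴴ * U) * (diagonal lam * Uᴴ) from by
      simp only [Matrix.mul_assoc], hUU, Matrix.mul_one]
    rw [Matrix.mul_assoc U, ← Matrix.mul_assoc (diagonal lam),
      Matrix.diagonal_mul_diagonal, ← Matrix.mul_assoc]
    congr 2
    funext i; ring
  have hconj : H + ρ • (H * H)
      = U * diagonal (fun i => lam i + ρ * lam i ^ 2) * Uᴴ := by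
    rw [hsq]
    conv_lhs => rw [hspec]
    rw [← Matrix.smul_mul, ← Matrix.mul_smul, ← Matrix.diagonal_smul,
      ← Matrix.add_mul, ← Matrix.mul_add, ← Matrix.diagonal_add]
    rfl
  rw [hconj]
  apply posDef_conj_of_isUnit
  · apply Matrix.PosDef.diagonal
    intro i
    by_cases h : i = i₀
    · subst h
      have h1 : ρ * lam i < -1 := (div_lt_iff_of_neg hneg).mp hρ
      nlinarith
    · have := hpos i h
      nlinarith
  · refine ⟨⟨U, Uᴴ, ?_, hUU⟩, rfl⟩
    rw [← Matrix.star_eq_conjTranspose]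
    exact (Matrix.mem_unitaryGroup_iff).mp hH.eigenvectorUnitary.2
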